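/- For every integer k ≥ 0: ((F(6k+4)-1)/2)*F(6k+3) + ((F(6k+1)-1)/2)*F(6k+5) = (F(6k+3)-1)*(F(6k+5)-1)/2. -/

import Mathlib

lemma cassiniZ : ∀ n : ℕ, (Nat.fib (n+1) : ℤ)^2 - Nat.fib n * Nat.fib (n+2) = (-1)^n := by
  intro n
  induction n with
  | zero => simp
  | succ m ih =>
    have hf : (Nat.fib (m+2) : ℤ) = Nat.fib m + Nat.fib (m+1) := by
      push_cast [Nat.fib_add_two]; ring
    have h : Nat.fib (m+1+2) = Nat.fib (m+1) + Nat.fib (m+2) := Nat.fib_add_two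
    rw [h]; push_cast
    linear_combination (-1:ℤ) * ih + (Nat.fib (m+2) : ℤ) * hf

theorem stmt_16 (k : ℕ) :
    (Nat.fib (6 * k + 4) - 1) / 2 * Nat.fib (6 * k + 3) +
      (Nat.fib (6 * k + 1) - 1) / 2 * Nat.fib (6 * k + 5) =
    (Nat.fib (6 * k + 3) - 1) * (Nat.fib (6 * k + 5) - 1) / 2 := by
  have h2 : Nat.fib (6 * k + 2) = Nat.fib (6*k) + Nat.fib (6*k+1) := Nat.fib_add_two
  have h3 : Nat.fib (6 * k + 3) = Nat.fib (6*k+1) + Nat.fib (6*k+2) := Nat.fib_add_two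
  have h4 : Nat.fib (6 * k + 4) = Nat.fib (6*k+2) + Nat.fib (6*k+3) := Nat.fib_add_two
  have h5 : Nat.fib (6 * k + 5) = Nat.fib (6*k+3) + Nat.fib (6*k+4) := Nat.fib_add_two
  have haeven : 2 ∣ Nat.fib (6*k) := by
    have : Nat.fib 3 ∣ Nat.fib (6 * k) := Nat.fib_dvd 3 (6*k) ⟨2*k, by ring⟩
    simpa [show Nat.fib 3 = 2 by rfl] using this
  have hbodd : ¬ 2 ∣ Nat.fib (6*k+1) := by
    intro hbe
    have hcop := Nat.fib_coprime_fib_succ (6 * k)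
    have : 2 ∣ Nat.gcd (Nat.fib (6*k)) (Nat.fib (6*k+1)) := Nat.dvd_gcd haeven hbe
    rw [hcop] at this
    omega
  obtain ⟨a', ha'⟩ := haeven
  obtain ⟨b', hb'⟩ : ∃ b', Nat.fib (6*k+1) = 2 * b' + 1 := ⟨Nat.fib (6*k+1) / 2, by omega⟩
  have h2' : Nat.fib (6 * k + 2) = 2*a' + 2*b' + 1 := by omega
  have h3' : Nat.fib (6 * k + 3) = 2*a' + 4*b' + 2 := by omega
  have h4' : Nat.fib (6 * k + 4) = 4*a' + 6*b' + 3 := by omega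
  have h5' : Nat.fib (6 * k + 5) = 6*a' + 10*b' + 5 := by omega
  have hcas := cassiniZ (6 * k)
  rw [ha', hb', h2'] at hcas
  rw [show 6*k = 2*(3*k) by ring, pow_mul] at hcas
  norm_num at hcas
  have hcasn : 2 * b' * b' + 2 * b' = 2 * a' * a' + 2 * a' * b' + a' := by nlinarith [hcas]
  rw [hb', h3', h4', h5']
  have e1 : (4*a' + 6*b' + 3 - 1) / 2 = 2*a' + 3*b' + 1 := by omega
  have e2 : (2*b' + 1 - 1) / 2 = b' := by omega
  rw [e1, e2]
  have s1 : 2*a' + 4*b' + 2 - 1 = 2*a' + 4*b' + 1 := by omega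
  have s2 : 6*a' + 10*b' + 5 - 1 = 6*a' + 10*b' + 4 := by omega
  rw [s1, s2]
  have e3 : (2*a' + 4*b' + 1) * (6*a' + 10*b' + 4) =
      2 * ((2*a' + 4*b' + 1) * (3*a' + 5*b' + 2)) := by ring
  rw [e3, Nat.mul_div_cancel_left _ (by norm_num)]
  zify
  zify at hcasn
  linear_combination hcasn
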